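/- Let ρ ∈ (-1,1), let g(y) = −2·log((√(1+ρy+y²/4) − ρ − y/2)/(1−ρ)) and f(y) = y/g(y) for y ≠ 0, f(0) = 1. Then lim_{y→0} (f(y) − 1)/y = ρ/4; that is, f is differentiable at 0 with f'(0) = ρ/4, which is the first-order approximation f(y) ≈ 1 + (ρ/4)·y of the SABR implied volatility. -/

import Mathlib

open Filter Topology

/-- For ρ ∈ (-1,1), with
g(y) = −2·log((√(1+ρy+y²/4) − ρ − y/2)/(1−ρ)) and f(y) = y/g(y) for y ≠ 0, f(0) = 1,
one has lim_{y→0} (f(y) − 1)/y = ρ/4; that is, f is differentiable at 0 with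
f'(0) = ρ/4 (the first-order approximation f(y) ≈ 1 + (ρ/4)y). -/
theorem stmt_4 (ρ : ℝ) (hρ : ρ ∈ Set.Ioo (-1 : ℝ) 1) (g f : ℝ → ℝ)
    (hg : ∀ y : ℝ, g y =
      -2 * Real.log ((Real.sqrt (1 + ρ * y + y ^ 2 / 4) - ρ - y / 2) / (1 - ρ)))
    (hf : ∀ y : ℝ, f y = if y = 0 then 1 else y / g y) :
    Tendsto (fun y : ℝ => (f y - 1) / y) (𝓝[≠] 0) (𝓝 (ρ / 4)) ∧
      HasDerivAt f (ρ / 4) 0 := by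
  obtain ⟨hρ1, hρ2⟩ := hρ
  set q : ℝ → ℝ := fun y => 1 + ρ * y + y ^ 2 / 4 with hqdef
  have hqpos : ∀ y, 0 < q y := by
    intro y
    show 0 < 1 + ρ * y + y ^ 2 / 4
    nlinarith [sq_nonneg (y / 2 + ρ), mul_pos (by linarith : (0:ℝ) < 1 - ρ) (by linarith : (0:ℝ) < 1 + ρ)]
  have hsq : ∀ y, Real.sqrt (q y) ^ 2 = q y := fun y => Real.sq_sqrt (hqpos y).le
  have hspos : ∀ y, 0 < Real.sqrt (q y) := fun y => Real.sqrt_pos.2 (hqpos y)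
  have hq0 : q 0 = 1 := by simp [hqdef]
  have hs0 : Real.sqrt (q 0) = 1 := by rw [hq0, Real.sqrt_one]
  -- numerator positive
  have hNpos : ∀ y, 0 < Real.sqrt (q y) - ρ - y / 2 := by
    intro y
    rcases le_or_gt (ρ + y / 2) 0 with h | h
    · have := hspos y; linarith
    · have h2 : (ρ + y / 2) ^ 2 < q y := by
        have : q y = (y / 2 + ρ) ^ 2 + (1 - ρ ^ 2) := by simp [hqdef]; ring
        nlinarith
      have := (Real.lt_sqrt h.le).2 (by simpa using h2)
      linarith
  -- g 0 = 0
  have hg0 : g 0 = 0 := by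
    rw [hg 0]
    have : Real.sqrt (1 + ρ * 0 + (0:ℝ) ^ 2 / 4) = 1 := by norm_num
    rw [this]
    have : (1 - ρ - (0:ℝ) / 2) / (1 - ρ) = 1 := by
      rw [div_eq_one_iff_eq (by linarith : (1:ℝ) - ρ ≠ 0)]; ring
    rw [this, Real.log_one]; ring
  -- derivative of g everywhere
  have hgderiv : ∀ y, HasDerivAt g (Real.sqrt (q y))⁻¹ y := by
    intro y
    have hq' : HasDerivAt q (ρ + y / 2) y := by
      have : HasDerivAt (fun y : ℝ => 1 + ρ * y + y ^ 2 / 4) (0 + ρ * 1 + 2 * y / 4) y := by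
        apply HasDerivAt.add
        apply HasDerivAt.add
        · exact hasDerivAt_const y 1
        · exact (hasDerivAt_id y).const_mul ρ
        · have := ((hasDerivAt_pow 2 y)).div_const 4
          simpa using this
      convert this using 1 <;> ring
    have hsq' : HasDerivAt (fun y => Real.sqrt (q y)) ((ρ + y / 2) / (2 * Real.sqrt (q y))) y := by
      have := (Real.hasDerivAt_sqrt (ne_of_gt (hqpos y))).comp y hq'
      refine this.congr_deriv ?_; ring
    have hN : HasDerivAt (fun y => Real.sqrt (q y) - ρ - y / 2)
        ((ρ + y / 2) / (2 * Real.sqrt (q y)) - 1 / 2) y := by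
      have := (hsq'.sub (hasDerivAt_const y ρ)).sub ((hasDerivAt_id y).div_const 2)
      exact this.congr_deriv (by ring)
    have hNdiv : HasDerivAt (fun y => (Real.sqrt (q y) - ρ - y / 2) / (1 - ρ))
        (((ρ + y / 2) / (2 * Real.sqrt (q y)) - 1 / 2) / (1 - ρ)) y := hN.div_const _
    have hargpos : 0 < (Real.sqrt (q y) - ρ - y / 2) / (1 - ρ) :=
      div_pos (hNpos y) (by linarith)
    have hlog := (Real.hasDerivAt_log (ne_of_gt hargpos)).comp y hNdiv
    have hfun : g = fun x => -2 * Real.log ((Real.sqrt (q x) - ρ - x / 2) / (1 - ρ)) := by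
      funext x; rw [hg x]
    have hG : HasDerivAt g
        (-2 * (((Real.sqrt (q y) - ρ - y / 2) / (1 - ρ))⁻¹ *
          (((ρ + y / 2) / (2 * Real.sqrt (q y)) - 1 / 2) / (1 - ρ)))) y := by
      rw [hfun]
      have h2 := HasDerivAt.const_mul (-2 : ℝ) hlog
      simp only [Function.comp] at h2
      exact h2
    have key : ∀ s : ℝ, s ≠ 0 → s - ρ - y / 2 ≠ 0 →
        s⁻¹ = -2 * (((s - ρ - y / 2) / (1 - ρ))⁻¹ *
          (((ρ + y / 2) / (2 * s) - 1 / 2) / (1 - ρ))) := by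
      intro s h1 h2
      have h1ρ : (1:ℝ) - ρ ≠ 0 := by linarith
      have e1 : (ρ + y / 2) / (2 * s) - 1 / 2 = (ρ + y / 2 - s) / (2 * s) := by
        field_simp
      rw [inv_div, e1, div_div, div_mul_div_comm, ← mul_div_assoc, inv_eq_one_div,
        div_eq_div_iff h1 (mul_ne_zero h2 (by positivity))]
      ring
    have := key (Real.sqrt (q y)) (ne_of_gt (hspos y)) (ne_of_gt (hNpos y))
    rw [this]
    exact hG
  have hgd0 : HasDerivAt g 1 0 := by
    have := hgderiv 0
    rwa [hs0, inv_one] at this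
  -- derivative of y ↦ (sqrt (q y))⁻¹ at 0 is -ρ/2
  have hGd : HasDerivAt (fun y => (Real.sqrt (q y))⁻¹) (-(ρ / 2)) 0 := by
    have hq' : HasDerivAt q ρ 0 := by
      have : HasDerivAt (fun y : ℝ => 1 + ρ * y + y ^ 2 / 4) (0 + ρ * 1 + 2 * 0 / 4) 0 := by
        apply HasDerivAt.add
        apply HasDerivAt.add
        · exact hasDerivAt_const 0 1
        · exact (hasDerivAt_id 0).const_mul ρ
        · have := ((hasDerivAt_pow 2 (0:ℝ))).div_const 4
          simpa using this
      convert this using 1 <;> ring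
    have hsq' : HasDerivAt (fun y => Real.sqrt (q y)) (ρ / 2) 0 := by
      have := (Real.hasDerivAt_sqrt (ne_of_gt (hqpos 0))).comp 0 hq'
      refine this.congr_deriv ?_
      rw [hs0]; ring
    have := hsq'.inv (by rw [hs0]; norm_num)
    refine this.congr_deriv ?_
    rw [hs0]; ring
  -- slope limits
  have hslope_g : Tendsto (fun y => g y / y) (𝓝[≠] 0) (𝓝 1) := by
    have := hasDerivAt_iff_tendsto_slope.mp hgd0
    refine this.congr fun y => ?_
    simp [slope, hg0, div_eq_inv_mul]
  have hslope_G : Tendsto (fun y => ((Real.sqrt (q y))⁻¹ - 1) / y) (𝓝[≠] 0) (𝓝 (-(ρ / 2))) := by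
    have := hasDerivAt_iff_tendsto_slope.mp hGd
    refine this.congr fun y => ?_
    simp [slope, hs0, div_eq_inv_mul]
  -- L'Hôpital for (y - g y)/y²
  have hLH : Tendsto (fun y => (y - g y) / y ^ 2) (𝓝[≠] 0) (𝓝 (ρ / 4)) := by
    apply HasDerivAt.lhopital_zero_nhdsNE
      (f' := fun y => 1 - (Real.sqrt (q y))⁻¹) (g' := fun y => 2 * y)
    · exact Eventually.of_forall fun y =>
        ((hasDerivAt_id y).sub (hgderiv y))
    · exact Eventually.of_forall fun y => by
        simpa using (hasDerivAt_pow 2 y)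
    · filter_upwards [self_mem_nhdsWithin] with y hy
      simpa using (hy : y ≠ 0)
    · have : ContinuousAt (fun y => y - g y) 0 :=
        ((hasDerivAt_id 0).sub hgd0).continuousAt
      have h := this.tendsto
      simp only [hg0, sub_zero] at h
      exact (tendsto_nhdsWithin_of_tendsto_nhds (by simpa using h))
    · have : Tendsto (fun y : ℝ => y ^ 2) (𝓝 0) (𝓝 0) := by
        simpa using (continuous_pow 2).tendsto (0:ℝ)
      exact tendsto_nhdsWithin_of_tendsto_nhds this
    · have : Tendsto (fun y => (-(1:ℝ)/2) * (((Real.sqrt (q y))⁻¹ - 1) / y)) (𝓝[≠] 0)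
          (𝓝 ((-(1:ℝ)/2) * (-(ρ / 2)))) := hslope_G.const_mul _
      have heq : (-(1:ℝ)/2) * (-(ρ / 2)) = ρ / 4 := by ring
      rw [heq] at this
      refine this.congr fun y => ?_
      ring
  -- g y ≠ 0 for y ≠ 0
  have hgmono : StrictMono g := by
    apply strictMono_of_deriv_pos
    intro y
    rw [(hgderiv y).deriv]
    exact inv_pos.2 (hspos y)
  have hgne : ∀ y : ℝ, y ≠ 0 → g y ≠ 0 := by
    intro y hy
    rw [← hg0]
    exact fun h => hy (hgmono.injective h)
  -- main limit
  have hmain : Tendsto (fun y : ℝ => (f y - 1) / y) (𝓝[≠] 0) (𝓝 (ρ / 4)) := by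
    have hinv : Tendsto (fun y => (g y / y)⁻¹) (𝓝[≠] 0) (𝓝 1) := by
      have := hslope_g.inv₀ one_ne_zero
      simpa using this
    have hprod := hLH.mul hinv
    rw [mul_one] at hprod
    refine hprod.congr' ?_
    filter_upwards [self_mem_nhdsWithin] with y hy
    have hy0 : y ≠ 0 := hy
    have hgy : g y ≠ 0 := hgne y hy0
    rw [hf y, if_neg hy0]
    field_simp
  refine ⟨hmain, ?_⟩
  rw [hasDerivAt_iff_tendsto_slope]
  refine hmain.congr fun y => ?_
  simp [slope, hf 0, div_eq_inv_mul]
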